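/- Let S be a cryptogroup and N a full normal subcryptogroup of S. Define the relation ρ_N on S by: a ρ_N b if and only if a⁻¹*b ∈ N and a⁰ = b⁰. Then ρ_N is a congruence on S (an equivalence relation such that a ρ_N b implies a*c ρ_N b*c and c*a ρ_N c*b for all c ∈ S), and the quotient semigroup S/ρ_N is a cryptogroup: it is completely regular and Green's relation ℋ on S/ρ_N is a congruence. -/
import Mathlib


open Set TopologicalSpace

/-- The principal left ideal (with `a` adjoined) generated by `a`: `{a} ∪ {s*a : s ∈ S}`. -/
def leftIdeal {S : Type*} [Semigroup S] (a : S) : Set S :=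
  insert a {x | ∃ s, x = s * a}

/-- The principal right ideal (with `a` adjoined) generated by `a`: `{a} ∪ {a*s : s ∈ S}`. -/
def rightIdeal {S : Type*} [Semigroup S] (a : S) : Set S :=
  insert a {x | ∃ s, x = a * s}

/-- Green's relation ℋ on a semigroup. -/
def greenH {S : Type*} [Semigroup S] (a b : S) : Prop :=
  leftIdeal a = leftIdeal b ∧ rightIdeal a = rightIdeal b

/-- The ℋ-class of an element. -/
def HClass {S : Type*} [Semigroup S] (x : S) : Set S := {y | greenH y x}

/-- A semigroup is completely regular if every element is completely regular. -/
def CompletelyRegularSemigroup (S : Type*) [Semigroup S] : Prop :=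
  ∀ a : S, ∃ x, a = a * x * a ∧ a * x = x * a

/-- Green's relation ℋ is a congruence. -/
def HIsCongruence (S : Type*) [Semigroup S] : Prop :=
  ∀ a b c : S, greenH a b → greenH (a * c) (b * c) ∧ greenH (c * a) (c * b)

/-- A cryptogroup is a completely regular semigroup in which ℋ is a congruence. -/
def IsCryptogroup (S : Type*) [Semigroup S] : Prop :=
  CompletelyRegularSemigroup S ∧ HIsCongruence S

/-- In a cryptogroup every ℋ-class is a group; `idp x` (written `x⁰`) is the identity of the
ℋ-class of `x`, and `inv x` (written `x⁻¹`) is the inverse of `x` inside its ℋ-class. -/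
structure CryptoOps (S : Type*) [Semigroup S] where
  idp : S → S
  inv : S → S
  idp_mem : ∀ x, greenH (idp x) x
  idp_mul : ∀ x y, greenH y x → idp x * y = y
  mul_idp : ∀ x y, greenH y x → y * idp x = y
  inv_mem : ∀ x, greenH (inv x) x
  mul_inv : ∀ x, x * inv x = idp x
  inv_mul : ∀ x, inv x * x = idp x

/-- The set `E(S)` of idempotents of a semigroup. -/
def idemSet (S : Type*) [Semigroup S] : Set S := {e | e * e = e}

/-- `(xU)* = {y ∈ S : x⁻¹*y ∈ U and x⁰ = y⁰}`. -/
def lstar {S : Type*} [Semigroup S] (ops : CryptoOps S) (x : S) (U : Set S) : Set S :=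
  {y | ops.inv x * y ∈ U ∧ ops.idp x = ops.idp y}

/-- `(Ux)* = {y ∈ S : y*x⁻¹ ∈ U and x⁰ = y⁰}`. -/
def rstar {S : Type*} [Semigroup S] (ops : CryptoOps S) (U : Set S) (x : S) : Set S :=
  {y | y * ops.inv x ∈ U ∧ ops.idp x = ops.idp y}

/-- `(AB)* = ⋃_{a ∈ A} (aB)*`. -/
def setStar {S : Type*} [Semigroup S] (ops : CryptoOps S) (A B : Set S) : Set S :=
  ⋃ a ∈ A, lstar ops a B

/-- A full subcryptogroup: contains all idempotents, and closed under multiplication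
and inversion. -/
def IsFullSubcryptogroup {S : Type*} [Semigroup S] (ops : CryptoOps S) (K : Set S) : Prop :=
  idemSet S ⊆ K ∧ (∀ x ∈ K, ∀ y ∈ K, x * y ∈ K) ∧ (∀ x ∈ K, ops.inv x ∈ K)

section AuxStmt19

variable {S : Type*} [Semigroup S]

theorem greenH_refl' (a : S) : greenH a a := ⟨rfl, rfl⟩
theorem greenH_symm' {a b : S} (h : greenH a b) : greenH b a := ⟨h.1.symm, h.2.symm⟩
theorem greenH_trans' {a b c : S} (h1 : greenH a b) (h2 : greenH b c) : greenH a c :=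
  ⟨h1.1.trans h2.1, h1.2.trans h2.2⟩

theorem mem_leftIdeal_self (a : S) : a ∈ leftIdeal a := Set.mem_insert _ _
theorem mem_rightIdeal_self (a : S) : a ∈ rightIdeal a := Set.mem_insert _ _

theorem mul_mem_leftIdeal (t b : S) : t * b ∈ leftIdeal b :=
  Set.mem_insert_iff.2 (Or.inr ⟨t, rfl⟩)
theorem mul_mem_rightIdeal (t b : S) : b * t ∈ rightIdeal b :=
  Set.mem_insert_iff.2 (Or.inr ⟨t, rfl⟩)

theorem leftIdeal_subset {a b : S} (h : a ∈ leftIdeal b) : leftIdeal a ⊆ leftIdeal b := by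
  rcases Set.mem_insert_iff.1 h with h | ⟨t, rfl⟩
  · subst h; exact subset_rfl
  · intro x hx
    rcases Set.mem_insert_iff.1 hx with rfl | ⟨u, rfl⟩
    · exact mul_mem_leftIdeal t b
    · exact Set.mem_insert_iff.2 (Or.inr ⟨u * t, (mul_assoc u t b).symm⟩)

theorem rightIdeal_subset {a b : S} (h : a ∈ rightIdeal b) : rightIdeal a ⊆ rightIdeal b := by
  rcases Set.mem_insert_iff.1 h with h | ⟨t, rfl⟩
  · subst h; exact subset_rfl
  · intro x hx
    rcases Set.mem_insert_iff.1 hx with rfl | ⟨u, rfl⟩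
    · exact mul_mem_rightIdeal t b
    · exact Set.mem_insert_iff.2 (Or.inr ⟨t * u, mul_assoc b t u⟩)

variable (ops : CryptoOps S)

theorem idp_idem' (x : S) : ops.idp x * ops.idp x = ops.idp x :=
  ops.idp_mul x _ (ops.idp_mem x)

theorem idp_eq_of_greenH {a b : S} (h : greenH a b) : ops.idp a = ops.idp b := by
  have h1 : ops.idp a * ops.idp b = ops.idp a :=
    ops.mul_idp b _ (greenH_trans' (ops.idp_mem a) h)
  have h2 : ops.idp a * ops.idp b = ops.idp b :=
    ops.idp_mul a _ (greenH_trans' (ops.idp_mem b) (greenH_symm' h))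
  exact h1.symm.trans h2

theorem greenH_of_idp_eq {a b : S} (h : ops.idp a = ops.idp b) : greenH a b :=
  greenH_trans' (greenH_symm' (ops.idp_mem a)) (h ▸ ops.idp_mem b)

include ops in
theorem mul_HClass (hcong : HIsCongruence S) {a x y : S}
    (hx : greenH x a) (hy : greenH y a) : greenH (x * y) a := by
  have e : greenH (ops.idp a) a := ops.idp_mem a
  have h1 : greenH (x * y) (ops.idp a * y) :=
    (hcong x (ops.idp a) y (greenH_trans' hx (greenH_symm' e))).1
  have h2 : greenH (ops.idp a * y) (ops.idp a * ops.idp a) :=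
    (hcong y (ops.idp a) (ops.idp a) (greenH_trans' hy (greenH_symm' e))).2
  have h3 : ops.idp a * ops.idp a = ops.idp a := idp_idem' ops a
  exact greenH_trans' h1 (greenH_trans' h2 (by rw [h3]; exact e))

theorem inv_unique' {x y : S} (hy : greenH y x) (h2 : y * x = ops.idp x) : y = ops.inv x := by
  calc y = y * ops.idp x := (ops.mul_idp x y hy).symm
    _ = y * (x * ops.inv x) := by rw [ops.mul_inv]
    _ = (y * x) * ops.inv x := (mul_assoc _ _ _).symm
    _ = ops.idp x * ops.inv x := by rw [h2]
    _ = ops.inv x := ops.idp_mul x _ (ops.inv_mem x)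

theorem inv_inv' (x : S) : ops.inv (ops.inv x) = x := by
  symm
  apply inv_unique' ops (greenH_symm' (ops.inv_mem x))
  rw [ops.mul_inv, idp_eq_of_greenH ops (ops.inv_mem x)]

/-- In the quotient by a congruence contained in ℋ, Green's ℋ coincides with ℋ downstairs. -/
theorem quot_greenH_iff (c : Con S) (hsub : ∀ a b : S, c a b → greenH a b) (a b : S) :
    greenH (a : c.Quotient) (b : c.Quotient) ↔ greenH a b := by
  constructor
  · rintro ⟨hl, hr⟩
    have memL : a ∈ leftIdeal b := by
      have : (a : c.Quotient) ∈ leftIdeal (b : c.Quotient) := hl ▸ mem_leftIdeal_self _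
      rcases Set.mem_insert_iff.1 this with h | ⟨q, hq⟩
      · have := hsub a b (c.eq.1 h)
        exact this.1 ▸ mem_leftIdeal_self a
      · obtain ⟨s, rfl⟩ : ∃ s : S, (s : c.Quotient) = q := Quot.inductionOn q fun s => ⟨s, rfl⟩
        rw [← Con.coe_mul] at hq
        have := hsub a (s * b) (c.eq.1 hq)
        exact leftIdeal_subset (mul_mem_leftIdeal s b) (this.1 ▸ mem_leftIdeal_self a)
    have memL' : b ∈ leftIdeal a := by
      have : (b : c.Quotient) ∈ leftIdeal (a : c.Quotient) := hl ▸ mem_leftIdeal_self _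
      rcases Set.mem_insert_iff.1 this with h | ⟨q, hq⟩
      · have := hsub b a (c.eq.1 h)
        exact this.1 ▸ mem_leftIdeal_self b
      · obtain ⟨s, rfl⟩ : ∃ s : S, (s : c.Quotient) = q := Quot.inductionOn q fun s => ⟨s, rfl⟩
        rw [← Con.coe_mul] at hq
        have := hsub b (s * a) (c.eq.1 hq)
        exact leftIdeal_subset (mul_mem_leftIdeal s a) (this.1 ▸ mem_leftIdeal_self b)
    have memR : a ∈ rightIdeal b := by
      have : (a : c.Quotient) ∈ rightIdeal (b : c.Quotient) := hr ▸ mem_rightIdeal_self _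
      rcases Set.mem_insert_iff.1 this with h | ⟨q, hq⟩
      · have := hsub a b (c.eq.1 h)
        exact this.2 ▸ mem_rightIdeal_self a
      · obtain ⟨s, rfl⟩ : ∃ s : S, (s : c.Quotient) = q := Quot.inductionOn q fun s => ⟨s, rfl⟩
        rw [← Con.coe_mul] at hq
        have := hsub a (b * s) (c.eq.1 hq)
        exact rightIdeal_subset (mul_mem_rightIdeal s b) (this.2 ▸ mem_rightIdeal_self a)
    have memR' : b ∈ rightIdeal a := by
      have : (b : c.Quotient) ∈ rightIdeal (a : c.Quotient) := hr ▸ mem_rightIdeal_self _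
      rcases Set.mem_insert_iff.1 this with h | ⟨q, hq⟩
      · have := hsub b a (c.eq.1 h)
        exact this.2 ▸ mem_rightIdeal_self b
      · obtain ⟨s, rfl⟩ : ∃ s : S, (s : c.Quotient) = q := Quot.inductionOn q fun s => ⟨s, rfl⟩
        rw [← Con.coe_mul] at hq
        have := hsub b (a * s) (c.eq.1 hq)
        exact rightIdeal_subset (mul_mem_rightIdeal s a) (this.2 ▸ mem_rightIdeal_self b)
    exact ⟨Set.Subset.antisymm (leftIdeal_subset memL) (leftIdeal_subset memL'),
      Set.Subset.antisymm (rightIdeal_subset memR) (rightIdeal_subset memR')⟩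
  · rintro ⟨hl, hr⟩
    have pushL : ∀ x y : S, x ∈ leftIdeal y → (x : c.Quotient) ∈ leftIdeal (y : c.Quotient) := by
      intro x y hx
      rcases Set.mem_insert_iff.1 hx with rfl | ⟨t, rfl⟩
      · exact mem_leftIdeal_self _
      · rw [Con.coe_mul]; exact mul_mem_leftIdeal _ _
    have pushR : ∀ x y : S, x ∈ rightIdeal y → (x : c.Quotient) ∈ rightIdeal (y : c.Quotient) := by
      intro x y hx
      rcases Set.mem_insert_iff.1 hx with rfl | ⟨t, rfl⟩
      · exact mem_rightIdeal_self _
      · rw [Con.coe_mul]; exact mul_mem_rightIdeal _ _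
    refine ⟨Set.Subset.antisymm ?_ ?_, Set.Subset.antisymm ?_ ?_⟩
    · exact leftIdeal_subset (pushL a b (hl ▸ mem_leftIdeal_self a))
    · exact leftIdeal_subset (pushL b a (hl ▸ mem_leftIdeal_self b))
    · exact rightIdeal_subset (pushR a b (hr ▸ mem_rightIdeal_self a))
    · exact rightIdeal_subset (pushR b a (hr ▸ mem_rightIdeal_self b))

end AuxStmt19

/-- For a full normal subcryptogroup `N` of a cryptogroup `S`, the relation
`a ρ_N b ↔ a⁻¹*b ∈ N ∧ a⁰ = b⁰` is a congruence on `S`, and the quotient semigroup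
`S/ρ_N` is a cryptogroup (completely regular with ℋ a congruence). -/
theorem stmt19 {S : Type*} [Semigroup S] (ops : CryptoOps S)
    (hcrypt : IsCryptogroup S) (N : Set S)
    (hN : IsFullSubcryptogroup ops N)
    (hNnormal : ∀ s : S, ∀ n ∈ N, s * n * ops.inv s ∈ N) :
    ∃ c : Con S,
      (∀ a b : S, c a b ↔ (ops.inv a * b ∈ N ∧ ops.idp a = ops.idp b)) ∧
      CompletelyRegularSemigroup c.Quotient ∧ HIsCongruence c.Quotient := by
  obtain ⟨hcr, hcong⟩ := hcrypt
  -- conjugation stays in N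
  have conj_mem : ∀ s m : S, m ∈ N → ops.inv s * m * s ∈ N := by
    intro s m hm
    have := hNnormal (ops.inv s) m hm
    rwa [inv_inv'] at this
  have idp_memN : ∀ x : S, ops.idp x ∈ N := fun x => hN.1 (idp_idem' ops x)
  -- absorption
  have absorb : ∀ a b : S, ops.idp a = ops.idp b → a * (ops.inv a * b) = b := by
    intro a b h
    rw [← mul_assoc, ops.mul_inv, h, ops.idp_mul b b (greenH_refl' b)]
  -- the relation
  set r : S → S → Prop := fun a b => ops.inv a * b ∈ N ∧ ops.idp a = ops.idp b with hr
  have hrefl : ∀ a, r a a := by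
    intro a
    exact ⟨by rw [ops.inv_mul]; exact idp_memN a, rfl⟩
  have nH : ∀ a b : S, ops.idp a = ops.idp b → greenH (ops.inv a * b) a := by
    intro a b h
    exact mul_HClass ops hcong (ops.inv_mem a) (greenH_symm' (greenH_of_idp_eq ops h))
  have hsymm : ∀ {a b}, r a b → r b a := by
    rintro a b ⟨hmem, hidp⟩
    refine ⟨?_, hidp.symm⟩
    have hxa : greenH (ops.inv a * b) a := nH a b hidp
    have hya : greenH (ops.inv b * a) a := by
      have := nH b a hidp.symm
      exact greenH_trans' this (greenH_of_idp_eq ops hidp.symm)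
    have key : ops.inv b * a = ops.inv (ops.inv a * b) := by
      apply inv_unique' ops (greenH_trans' hya (greenH_symm' hxa))
      have e1 : (ops.inv b * a) * (ops.inv a * b) = ops.idp b := by
        calc (ops.inv b * a) * (ops.inv a * b) = ops.inv b * (a * (ops.inv a * b)) := by
              simp only [mul_assoc]
          _ = ops.inv b * b := by rw [absorb a b hidp]
          _ = ops.idp b := ops.inv_mul b
      rw [e1, idp_eq_of_greenH ops hxa, hidp]
    rw [key]
    exact hN.2.2 _ hmem
  have htrans : ∀ {a b c}, r a b → r b c → r a c := by
    rintro a b c ⟨h1, h2⟩ ⟨h3, h4⟩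
    refine ⟨?_, h2.trans h4⟩
    have : (ops.inv a * b) * (ops.inv b * c) = ops.inv a * c := by
      rw [mul_assoc, absorb b c h4]
    rw [← this]
    exact hN.2.1 _ h1 _ h3
  -- right compatibility
  have hright : ∀ {a b} (c0 : S), r a b → r (a * c0) (b * c0) := by
    rintro a b c0 ⟨hmem, hidp⟩
    set n := ops.inv a * b with hn
    have hb : b = a * n := (absorb a b hidp).symm
    have hnHa : greenH n a := nH a b hidp
    have hn' : n * ops.idp a = n := ops.mul_idp a n hnHa
    refine ⟨?_, idp_eq_of_greenH ops (hcong a b c0 (greenH_of_idp_eq ops hidp)).1⟩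
    have e1 : (a * n * ops.inv a) * (a * c0) = a * (n * c0) := by
      simp only [mul_assoc]
      rw [← mul_assoc (ops.inv a) a c0, ops.inv_mul, ← mul_assoc n, hn']
    have key : ops.inv (a * c0) * (b * c0)
        = ops.inv (a * c0) * (a * n * ops.inv a) * ops.inv (ops.inv (a * c0)) := by
      rw [inv_inv' ops, mul_assoc, e1, hb, mul_assoc]
    rw [key]
    exact hNnormal (ops.inv (a * c0)) _ (hNnormal a n hmem)
  -- left compatibility
  have hleft : ∀ {a b} (c0 : S), r a b → r (c0 * a) (c0 * b) := by
    rintro a b c0 ⟨hmem, hidp⟩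
    set n := ops.inv a * b with hn
    have hb : b = a * n := (absorb a b hidp).symm
    refine ⟨?_, idp_eq_of_greenH ops (hcong a b c0 (greenH_of_idp_eq ops hidp)).2⟩
    have key : ops.inv (c0 * a) * (c0 * b) = ops.idp (c0 * a) * n := by
      rw [hb, ← mul_assoc c0 a n, ← mul_assoc, ops.inv_mul]
    rw [key]
    exact hN.2.1 _ (idp_memN _) _ hmem
  -- build the congruence
  set c : Con S := ⟨⟨r, ⟨hrefl, hsymm, htrans⟩⟩, fun h1 h2 =>
    htrans (hright _ h1) (hleft _ h2)⟩ with hc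
  have hsub : ∀ a b : S, c a b → greenH a b := fun a b h => greenH_of_idp_eq ops h.2
  have exrep : ∀ q : c.Quotient, ∃ a : S, (a : c.Quotient) = q := fun q =>
    Quot.inductionOn q fun a => ⟨a, rfl⟩
  refine ⟨c, fun a b => Iff.rfl, ?_, ?_⟩
  · -- completely regular
    intro q
    obtain ⟨a, rfl⟩ := exrep q
    refine ⟨(ops.inv a : S), ?_, ?_⟩
    · rw [← Con.coe_mul, ← Con.coe_mul]
      congr 1
      rw [ops.mul_inv, ops.idp_mul a a (greenH_refl' a)]
    · rw [← Con.coe_mul, ← Con.coe_mul]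
      congr 1
      rw [ops.mul_inv, ops.inv_mul]
  · -- ℋ is a congruence on the quotient
    intro qa qb qc h
    obtain ⟨a, rfl⟩ := exrep qa
    obtain ⟨b, rfl⟩ := exrep qb
    obtain ⟨d, rfl⟩ := exrep qc
    rw [quot_greenH_iff c hsub] at h
    constructor
    · rw [← Con.coe_mul, ← Con.coe_mul, quot_greenH_iff c hsub]
      exact (hcong a b d h).1
    · rw [← Con.coe_mul, ← Con.coe_mul, quot_greenH_iff c hsub]
      exact (hcong a b d h).2
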